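/- arXiv:1603.09029 — 5 statements merged into one kernel-verified Lean document; each statement's English description precedes it below -/
import Mathlib

section
/- Let g be a monotone set function with g strictly monotone in the sense that g(A) < g(A ∪ {x}) for x ∉ A, and let k ≥ 1 be an integer. If c(S) = (g(S))^k for all S, then g is cost-sensitively submodular with respect to c. -/
theorem stmt2 {α : Type*} [DecidableEq α] [Fintype α]
    (g : Finset α → ℝ) (hg0 : ∀ S, 0 ≤ g S)
    (hmono : ∀ A B : Finset α, A ⊆ B → g A ≤ g B)
    (hstrict : ∀ (A : Finset α) (x : α), x ∉ A → g A < g (insert x A))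
    (k : ℕ) (hk : 1 ≤ k) (c : Finset α → ℝ) (hc : ∀ S, c S = (g S) ^ k) :
    ∀ A B : Finset α, ∀ x : α, A ⊆ B → x ∉ B →
      (g (insert x A) - g A) * (c (insert x B) - c B) ≥
        (g (insert x B) - g B) * (c (insert x A) - c A) := by
  intro A B x hAB hxB
  have hxA : x ∉ A := fun h => hxB (hAB h)
  set a := g A
  set a' := g (insert x A)
  set b := g B
  set b' := g (insert x B)
  have hab : a ≤ b := hmono _ _ hAB
  have hab' : a' ≤ b' := hmono _ _ (Finset.insert_subset_insert _ hAB)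
  have haa' : a < a' := hstrict A x hxA
  have hbb' : b < b' := hstrict B x hxB
  have ha0 : 0 ≤ a := hg0 A
  have hb0 : 0 ≤ b := hg0 B
  have hcA : c (insert x A) - c A =
      (∑ i ∈ Finset.range k, a' ^ i * a ^ (k - 1 - i)) * (a' - a) := by
    rw [hc, hc, ← geom_sum₂_mul]
  have hcB : c (insert x B) - c B =
      (∑ i ∈ Finset.range k, b' ^ i * b ^ (k - 1 - i)) * (b' - b) := by
    rw [hc, hc, ← geom_sum₂_mul]
  rw [hcA, hcB]
  have hsum : (∑ i ∈ Finset.range k, a' ^ i * a ^ (k - 1 - i)) ≤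
      (∑ i ∈ Finset.range k, b' ^ i * b ^ (k - 1 - i)) := by
    apply Finset.sum_le_sum
    intro i _
    exact mul_le_mul (pow_le_pow_left₀ (le_of_lt (lt_of_le_of_lt ha0 haa')) hab' i)
      (pow_le_pow_left₀ ha0 hab _) (pow_nonneg ha0 _)
      (pow_nonneg (le_of_lt (lt_of_le_of_lt hb0 hbb')) _)
  have hsA : 0 ≤ (∑ i ∈ Finset.range k, a' ^ i * a ^ (k - 1 - i)) := by
    apply Finset.sum_nonneg
    intro i _
    exact mul_nonneg (pow_nonneg (le_trans ha0 haa'.le) _) (pow_nonneg ha0 _)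
  nlinarith [mul_pos (sub_pos.mpr haa') (sub_pos.mpr hbb')]
end

section
/- Let g be a strictly monotone nonnegative set function, and let c(S) = Σ_{i=1}^n a_i (g(S))^i where n ≥ 1, all a_i ≥ 0, and Σ a_i > 0. Then g is cost-sensitively submodular with respect to c, i.e., for all A ⊆ B ⊆ X and x ∉ B, (g(A∪{x}) − g(A))·(c(B∪{x}) − c(B)) ≥ (g(B∪{x}) − g(B))·(c(A∪{x}) − c(A)). -/
theorem stmt3 {α : Type*} [DecidableEq α] [Fintype α]
    (g : Finset α → ℝ) (hg0 : ∀ S, 0 ≤ g S)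
    (hstrict : ∀ (A : Finset α) (x : α), x ∉ A → g A < g (insert x A))
    (n : ℕ) (hn : 1 ≤ n) (a : ℕ → ℝ)
    (ha : ∀ i ∈ Finset.Icc 1 n, 0 ≤ a i)
    (hasum : 0 < ∑ i ∈ Finset.Icc 1 n, a i)
    (c : Finset α → ℝ) (hc : ∀ S, c S = ∑ i ∈ Finset.Icc 1 n, a i * (g S) ^ i) :
    ∀ A B : Finset α, ∀ x : α, A ⊆ B → x ∉ B →
      (g (insert x A) - g A) * (c (insert x B) - c B) ≥
        (g (insert x B) - g B) * (c (insert x A) - c A) := by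
  have hmono : ∀ (k : ℕ) (A B : Finset α), A ⊆ B → (B \ A).card = k → g A ≤ g B := by
    intro k
    induction k with
    | zero =>
      intro A B hAB hcard
      have h0 : B \ A = ∅ := Finset.card_eq_zero.mp hcard
      have hBA : B ⊆ A := by
        intro y hy
        by_contra hyA
        have : y ∈ B \ A := Finset.mem_sdiff.mpr ⟨hy, hyA⟩
        simp [h0] at this
      rw [Finset.Subset.antisymm hAB hBA]
    | succ k ih =>
      intro A B hAB hcard
      have hne : (B \ A).Nonempty := by
        rw [← Finset.card_pos, hcard]; omega
      obtain ⟨y, hy⟩ := hne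
      have hyB := (Finset.mem_sdiff.mp hy).1
      have hyA := (Finset.mem_sdiff.mp hy).2
      have hsub : insert y A ⊆ B := Finset.insert_subset hyB hAB
      have hcard' : (B \ insert y A).card = k := by
        have heq : B \ insert y A = (B \ A).erase y := by
          ext z
          simp only [Finset.mem_sdiff, Finset.mem_erase, Finset.mem_insert]
          tauto
        rw [heq, Finset.card_erase_of_mem hy, hcard]
        rfl
      exact le_trans (le_of_lt (hstrict A y hyA)) (ih (insert y A) B hsub hcard')
  have hmono' : ∀ A B : Finset α, A ⊆ B → g A ≤ g B := fun A B h => hmono _ A B h rfl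
  intro A B x hAB hxB
  have hxA : x ∉ A := fun h => hxB (hAB h)
  have h1 : g A ≤ g B := hmono' A B hAB
  have h2 : g (insert x A) ≤ g (insert x B) :=
    hmono' _ _ (Finset.insert_subset_insert _ hAB)
  have hgA : g A < g (insert x A) := hstrict A x hxA
  have hgB : g B < g (insert x B) := hstrict B x hxB
  have key : ∀ S S' : Finset α, c S' - c S =
      (g S' - g S) * ∑ i ∈ Finset.Icc 1 n, a i *
        ∑ j ∈ Finset.range i, g S' ^ j * g S ^ (i - 1 - j) := by
    intro S S'
    rw [hc, hc, ← Finset.sum_sub_distrib, Finset.mul_sum]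
    refine Finset.sum_congr rfl fun i _ => ?_
    rw [← mul_sub]
    rw [← geom_sum₂_mul (g S') (g S) i]
    ring
  rw [key B (insert x B), key A (insert x A)]
  set PA := ∑ i ∈ Finset.Icc 1 n, a i *
      ∑ j ∈ Finset.range i, g (insert x A) ^ j * g A ^ (i - 1 - j) with hPA
  set PB := ∑ i ∈ Finset.Icc 1 n, a i *
      ∑ j ∈ Finset.range i, g (insert x B) ^ j * g B ^ (i - 1 - j) with hPB
  have hP : PA ≤ PB := by
    apply Finset.sum_le_sum
    intro i hi
    apply mul_le_mul_of_nonneg_left _ (ha i hi)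
    apply Finset.sum_le_sum
    intro j _
    apply mul_le_mul (pow_le_pow_left₀ (hg0 _) h2 j) (pow_le_pow_left₀ (hg0 _) h1 _)
      (pow_nonneg (hg0 _) _) (pow_nonneg (hg0 _) _)
  have hd : 0 < (g (insert x A) - g A) * (g (insert x B) - g B) :=
    mul_pos (by linarith) (by linarith)
  nlinarith [mul_le_mul_of_nonneg_left hP hd.le]
end

section
/- Consider two items x1, x2 with a single state, utility f(S) = Σ_{x∈S} w(x) where w(x1) = 1, w(x2) = p for p > 1, modular cost c with c({x1}) = 1, c({x2}) = p+1, and budget K = p+1 (so at most one item can be selected). The greedy rule maximizing w(x)/c({x}) selects x1 (since 1/1 > p/(p+1)), achieving utility 1, while the optimal selection is {x2} with utility p. Hence the cost-average greedy achieves exactly a 1/p fraction of the optimum, which is less than any α > 0 for p > 1/α. -/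
theorem stmt13 (a : ℝ) (ha : 0 < a) :
    ∃ p : ℝ, 1 < p ∧
      -- weights and costs of the two items x₁ = 0 and x₂ = 1
      (let w : Fin 2 → ℝ := fun i => if i = 0 then 1 else p
       let cs : Fin 2 → ℝ := fun i => if i = 0 then 1 else p + 1
       -- the greedy benefit-per-cost rule prefers x₁
       w 0 / cs 0 > w 1 / cs 1 ∧
       -- greedy thus selects {x₁} (the budget K = p+1 allows at most one item),
       -- achieving worst-case utility 1
       (∑ x ∈ ({0} : Finset (Fin 2)), w x) = 1 ∧
       -- the optimal budget-feasible value is p, attained at {x₂}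
       IsGreatest {vl : ℝ | ∃ S : Finset (Fin 2),
          (∑ x ∈ S, cs x) ≤ p + 1 ∧ vl = ∑ x ∈ S, w x} p) ∧
      1 / p < a := by
  refine ⟨max 2 (2 / a), lt_of_lt_of_le one_lt_two (le_max_left _ _), ?_, ?_⟩
  · set p := max 2 (2 / a) with hp
    have hp2 : (2:ℝ) ≤ p := le_max_left _ _
    have hp1 : (1:ℝ) < p := by linarith
    have hp0 : (0:ℝ) < p := by linarith
    refine ⟨?_, by simp, ⟨⟨{1}, by simp, by simp⟩, ?_⟩⟩
    · simp only [one_ne_zero, if_true, if_false]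
      rw [gt_iff_lt, div_self (by norm_num : (1:ℝ) ≠ 0), div_lt_one (by linarith)]
      linarith
    · rintro v ⟨S, hS, rfl⟩
      fin_cases S <;> simp_all <;> linarith
  · have h2a : 2 / a ≤ max 2 (2 / a) := le_max_right _ _
    have hpos : (0:ℝ) < max 2 (2 / a) := lt_of_lt_of_le two_pos (le_max_left _ _)
    rw [div_lt_iff₀ hpos]
    have : 2 / a * a = 2 := div_mul_cancel₀ 2 (ne_of_gt ha)
    nlinarith [mul_le_mul_of_nonneg_right h2a (le_of_lt ha)]
end

section
/- Consider n+1 items x0, x1, …, xn with a single state, utility f(S) = Σ_{x∈S} w(x) where w(x0) = 2 and w(xi) = 1 for i ≥ 1, modular cost c({x0}) = n, c({xi}) = 1 for i ≥ 1, and budget K = n. The greedy rule maximizing w(x) selects x0 first (utility 2, exhausting the budget), while the feasible set {x1,…,xn} has utility n. Hence cost-insensitive greedy achieves a 2/n fraction of the optimum, which is less than any α > 0 for n > 2/α. -/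
theorem stmt14 (a : ℝ) (ha : 0 < a) :
    ∃ n : ℕ, 2 ≤ n ∧ (2 : ℝ) / n < a ∧
      (let w : Fin (n + 1) → ℝ := fun i => if i = 0 then 2 else 1
       let cs : Fin (n + 1) → ℝ := fun i => if i = 0 then n else 1
       -- the cost-insensitive greedy rule prefers x₀ over every other item
       (∀ i : Fin (n + 1), i ≠ 0 → w 0 > w i) ∧
       -- greedy selects {x₀}, exhausting the budget K = n, with value 2
       (∑ x ∈ ({0} : Finset (Fin (n + 1))), w x) = 2 ∧
       (∑ x ∈ ({0} : Finset (Fin (n + 1))), cs x) = n ∧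
       -- the optimal budget-feasible value is n
       IsGreatest {vl : ℝ | ∃ S : Finset (Fin (n + 1)),
          (∑ x ∈ S, cs x) ≤ n ∧ vl = ∑ x ∈ S, w x} n) := by
  refine ⟨⌈2 / a⌉₊ + 2, by omega, ?_, ?_⟩
  · have hn : (2 : ℝ) / a < (⌈2 / a⌉₊ + 2 : ℕ) := by
      push_cast
      calc (2 : ℝ) / a ≤ ⌈2 / a⌉₊ := Nat.le_ceil _
        _ < ⌈2 / a⌉₊ + 2 := by linarith
    have hpos : (0 : ℝ) < (⌈2 / a⌉₊ + 2 : ℕ) := by positivity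
    rw [div_lt_iff₀ hpos]
    have := (div_lt_iff₀ ha).mp hn
    linarith [mul_comm a ((⌈2 / a⌉₊ + 2 : ℕ) : ℝ)]
  · set n : ℕ := ⌈2 / a⌉₊ + 2 with hn
    intro w cs
    have hn2 : (2 : ℝ) ≤ n := by
      have : (2 : ℕ) ≤ n := by omega
      exact_mod_cast this
    have key : ∀ S : Finset (Fin (n + 1)),
        (∑ x ∈ S, w x) = (if (0 : Fin (n+1)) ∈ S then 2 else 0) + (S.erase 0).card ∧
        (∑ x ∈ S, cs x) = (if (0 : Fin (n+1)) ∈ S then (n : ℝ) else 0) + (S.erase 0).card := by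
      intro S
      have he : ∀ g : Fin (n+1) → ℝ, (∑ x ∈ S.erase 0, g x) = ∑ x ∈ S.erase 0, (1 : ℝ) →
          True := fun _ _ => trivial
      have hw : (∑ x ∈ S.erase 0, w x) = ((S.erase 0).card : ℝ) := by
        rw [Finset.sum_congr rfl (fun x hx => ?_), Finset.sum_const, nsmul_eq_mul, mul_one]
        simp only [w, if_neg (Finset.ne_of_mem_erase hx)]
      have hc : (∑ x ∈ S.erase 0, cs x) = ((S.erase 0).card : ℝ) := by
        rw [Finset.sum_congr rfl (fun x hx => ?_), Finset.sum_const, nsmul_eq_mul, mul_one]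
        simp only [cs, if_neg (Finset.ne_of_mem_erase hx)]
      by_cases h0 : (0 : Fin (n+1)) ∈ S
      · rw [← Finset.add_sum_erase S w h0, ← Finset.add_sum_erase S cs h0, hw, hc,
          if_pos h0, if_pos h0]
        simp [w, cs]
      · rw [Finset.erase_eq_of_notMem h0] at hw hc ⊢
        rw [if_neg h0, if_neg h0, hw, hc]
        simp
    refine ⟨fun i hi => ?_, ?_, ?_, ⟨({0}ᶜ : Finset (Fin (n+1))), ?_, ?_⟩, ?_⟩
    · simp [w, hi]
    · simp [w]
    · simp [cs]
    · have h0 : (0 : Fin (n+1)) ∉ ({0}ᶜ : Finset (Fin (n+1))) := by simp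
      rw [(key _).2, if_neg h0, Finset.erase_eq_of_notMem h0]
      simp [Finset.card_compl]
    · have h0 : (0 : Fin (n+1)) ∉ ({0}ᶜ : Finset (Fin (n+1))) := by simp
      rw [(key _).1, if_neg h0, Finset.erase_eq_of_notMem h0]
      simp [Finset.card_compl]
    · rintro v ⟨S, hS, rfl⟩
      rcases key S with ⟨kw, kc⟩
      rw [kw]; rw [kc] at hS
      by_cases h0 : (0 : Fin (n+1)) ∈ S
      · rw [if_pos h0] at *
        have : ((S.erase 0).card : ℝ) = 0 := by
          have : (0:ℝ) ≤ ((S.erase 0).card : ℝ) := by positivity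
          linarith
        linarith
      · rw [if_neg h0] at *
        linarith
end

section
/- In the same instance as Theorem 3 (items x0,…,xn, w(x0)=2, w(xi)=1, c({x0})=n, c({xi})=1, modular c), with half budget K/2 = n/2, the optimal feasible value is ⌊n/2⌋ ≥ (n−1)/2, while cost-insensitive greedy with full budget n achieves 2. Hence for any α > 0 there is n such that the greedy value with full budget is less than α times the optimal value with half budget. -/
theorem stmt15 (a : ℝ) (ha : 0 < a) :
    ∃ n : ℕ, 2 ≤ n ∧
      (let w : Fin (n + 1) → ℝ := fun i => if i = 0 then 2 else 1
       let cs : Fin (n + 1) → ℝ := fun i => if i = 0 then n else 1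
       -- cost-insensitive greedy with full budget n selects only x₀, value 2
       (∀ i : Fin (n + 1), i ≠ 0 → w 0 > w i) ∧
       (∑ x ∈ ({0} : Finset (Fin (n + 1))), w x) = 2 ∧
       -- optimal value with half budget n/2 is ⌊n/2⌋
       IsGreatest {vl : ℝ | ∃ S : Finset (Fin (n + 1)),
          (∑ x ∈ S, cs x) ≤ (n : ℝ) / 2 ∧ vl = ∑ x ∈ S, w x} ((n / 2 : ℕ) : ℝ) ∧
       ((n : ℝ) - 1) / 2 ≤ ((n / 2 : ℕ) : ℝ) ∧
       -- greedy with full budget achieves less than α times the optimum with half budget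
       (2 : ℝ) < a * ((n / 2 : ℕ) : ℝ)) := by
  set m : ℕ := ⌈2 / a⌉₊ + 1 with hm
  have hm1 : 1 ≤ m := by omega
  have hmgt : 2 / a < (m : ℝ) := by
    calc 2 / a ≤ (⌈2 / a⌉₊ : ℝ) := Nat.le_ceil _
    _ < m := by push_cast [hm]; linarith
  refine ⟨2 * m, by omega, ?_⟩
  set n : ℕ := 2 * m with hn
  intro w cs
  have hdiv : n / 2 = m := by omega
  have hmcast : ((n / 2 : ℕ) : ℝ) = (m : ℝ) := by rw [hdiv]
  refine ⟨?_, ?_, ?_, ?_, ?_⟩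
  · intro i hi
    simp only [w, if_pos rfl, if_neg hi]; norm_num
  · simp [w]
  · constructor
    · refine ⟨Finset.image (fun j : Fin m => (⟨j + 1, by omega⟩ : Fin (n + 1))) Finset.univ, ?_, ?_⟩
      · have hinj : Function.Injective (fun j : Fin m => (⟨j + 1, by omega⟩ : Fin (n + 1))) := by
          intro a b hab
          simpa [Fin.ext_iff] using hab
        rw [Finset.sum_image (fun a _ b _ h => hinj h)]
        have : ∀ j : Fin m, cs ⟨j + 1, by omega⟩ = 1 := by
          intro j
          have hne : (⟨j + 1, by omega⟩ : Fin (n + 1)) ≠ 0 := by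
            intro h; have h' := congrArg Fin.val h; rw [Fin.val_zero] at h'; exact Nat.succ_ne_zero _ h'
          simp only [cs, if_neg hne]
        rw [Finset.sum_congr rfl (fun j _ => this j)]
        simp only [Finset.sum_const, Finset.card_univ, Fintype.card_fin, nsmul_eq_mul, mul_one]
        push_cast [hn]; linarith
      · have hinj : Function.Injective (fun j : Fin m => (⟨j + 1, by omega⟩ : Fin (n + 1))) := by
          intro a b hab
          simpa [Fin.ext_iff] using hab
        rw [Finset.sum_image (fun a _ b _ h => hinj h)]
        have : ∀ j : Fin m, w ⟨j + 1, by omega⟩ = 1 := by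
          intro j
          have hne : (⟨j + 1, by omega⟩ : Fin (n + 1)) ≠ 0 := by
            intro h; have h' := congrArg Fin.val h; rw [Fin.val_zero] at h'; exact Nat.succ_ne_zero _ h'
          simp only [w, if_neg hne]
        rw [Finset.sum_congr rfl (fun j _ => this j)]
        simp [hmcast]
    · rintro vl ⟨S, hS, rfl⟩
      by_cases h0 : (0 : Fin (n + 1)) ∈ S
      · exfalso
        have hle : (n : ℝ) ≤ ∑ x ∈ S, cs x := by
          have := Finset.single_le_sum (f := cs) (fun i _ => by
            by_cases hi : i = 0 <;> simp [cs, hi] <;> positivity) h0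
          simpa [cs] using this
        have hn2 : (2 : ℝ) ≤ (n : ℝ) := by exact_mod_cast (by omega : 2 ≤ n)
        linarith
      · have hw : ∑ x ∈ S, w x = (S.card : ℝ) := by
          rw [show ((S.card : ℝ)) = ∑ _x ∈ S, (1 : ℝ) by simp]
          exact Finset.sum_congr rfl (fun x hx => by
            have : x ≠ 0 := fun h => h0 (h ▸ hx)
            simp [w, this])
        have hc : ∑ x ∈ S, cs x = (S.card : ℝ) := by
          rw [show ((S.card : ℝ)) = ∑ _x ∈ S, (1 : ℝ) by simp]
          exact Finset.sum_congr rfl (fun x hx => by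
            have : x ≠ 0 := fun h => h0 (h ▸ hx)
            simp [cs, this])
        rw [hw, hmcast]
        rw [hc] at hS
        have : (S.card : ℝ) ≤ (m : ℝ) := by
          have : (n : ℝ) = 2 * m := by push_cast [hn]; ring
          linarith
        exact this
  · rw [hmcast]
    have : (n : ℝ) = 2 * m := by push_cast [hn]; ring
    linarith
  · rw [hmcast]
    rw [div_lt_iff₀ ha] at hmgt
    linarith
end
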